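/- Let T be a tree-layout of a graph G of bandwidth at most k. Define H as the supergraph of G on V(G) obtained by adding, for every edge xy of G, all edges making the interval [x,y] of T (the vertex set of the T-path between x and y) a clique. Then every maximal clique of H is an interval of T, i.e. its vertices appear consecutively on a root-to-leaf path of T, and ω(H) ≤ k+1. -/

import Mathlib

open SimpleGraph

/-- `x` is a (reflexive) ancestor of `y` in the tree `T` rooted at `r`,
expressed metrically: `x` lies on the unique `r`–`y` path. -/
def AncIn {V : Type*} (T : SimpleGraph V) (r x y : V) : Prop :=
  T.dist r x + T.dist x y = T.dist r y

/-- A tree-layout of `G`: a rooted tree on the vertex set of `G` such that the endpoints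
of every edge of `G` are in ancestor-descendant relation. -/
structure TreeLayout {V : Type*} (G : SimpleGraph V) where
  tree : SimpleGraph V
  isTree : tree.IsTree
  root : V
  layout : ∀ ⦃x y : V⦄, G.Adj x y → AncIn tree root x y ∨ AncIn tree root y x

namespace TreeLayout

variable {V : Type*} {G : SimpleGraph V}

/-- `x` is an ancestor of `y` (reflexively) in the tree-layout. -/
def Anc (L : TreeLayout G) (x y : V) : Prop := AncIn L.tree L.root x y

def StrictAnc (L : TreeLayout G) (x y : V) : Prop := L.Anc x y ∧ x ≠ y

/-- The bandwidth of the tree-layout is at most `k`: neighbours in `G` are at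
tree-distance at most `k`. -/
def BandwidthLE (L : TreeLayout G) (k : ℕ) : Prop :=
  ∀ ⦃x y : V⦄, G.Adj x y → L.tree.dist x y ≤ k

/-- The interval `[a,b]` of the tree-layout: vertices on the tree path from `a` to `b`
(for `a` an ancestor of `b`). -/
def interval (L : TreeLayout G) (a b : V) : Set V := {z : V | L.Anc a z ∧ L.Anc z b}

end TreeLayout

/-- Treebandwidth: the minimum bandwidth over tree-layouts of `G`. -/
noncomputable def treebandwidth {V : Type*} (G : SimpleGraph V) : ℕ :=
  sInf {k | ∃ L : TreeLayout G, L.BandwidthLE k}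

/-- Treedepth: the minimum depth (number of vertices on a root-to-leaf path) of a
tree-layout (elimination tree) of `G`. -/
noncomputable def treedepth {V : Type*} (G : SimpleGraph V) : ℕ :=
  sInf {k | ∃ L : TreeLayout G, ∀ v : V, L.tree.dist L.root v + 1 ≤ k}

/-- A tree-partition of `G`: a partition of `V(G)` indexed by the nodes of a tree such that
every edge of `G` has both ends in one part or in parts indexed by adjacent nodes. -/
structure TreePartition {V : Type*} (G : SimpleGraph V) where
  ι : Type
  tree : SimpleGraph ι
  isTree : tree.IsTree
  part : V → ι
  adj : ∀ ⦃x y : V⦄, G.Adj x y → part x = part y ∨ tree.Adj (part x) (part y)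

/-- Tree-partition-width: minimum over tree-partitions of the maximum part size. -/
noncomputable def treePartitionWidth {V : Type*} (G : SimpleGraph V) : ℕ :=
  sInf {k | ∃ P : TreePartition G, ∀ i : P.ι, {v : V | P.part v = i}.ncard ≤ k}

/-- The connected component of `v` in the subgraph of `G` induced by `S`. -/
def connCompIn {V : Type*} (G : SimpleGraph V) (S : Set V) (v : V) : Set V :=
  {w : V | ∃ (hv : v ∈ S) (hw : w ∈ S), (G.induce S).Reachable ⟨v, hv⟩ ⟨w, hw⟩}

/-- `RootedTreedepthLE G U S n` expresses `td(G[S], U) ≤ n` for the rooted treedepth: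
it is `0` when `S` misses `U`, and otherwise one may delete one vertex from each
connected component and recurse. -/
inductive RootedTreedepthLE {V : Type*} (G : SimpleGraph V) (U : Set V) : Set V → ℕ → Prop
  | base (S : Set V) (n : ℕ) (h : S ∩ U = ∅) : RootedTreedepthLE G U S n
  | step (S : Set V) (n : ℕ) (pick : ∀ v : V, v ∈ S → V)
      (hpick : ∀ (v : V) (hv : v ∈ S), pick v hv ∈ connCompIn G S v)
      (h : ∀ (v : V) (hv : v ∈ S),
        RootedTreedepthLE G U (connCompIn G S v \ {pick v hv}) n) :
      RootedTreedepthLE G U S (n + 1)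

/-- A `U`-rooted minor model of the path on `k` vertices in `G`. -/
structure RootedPathMinor {V : Type*} (G : SimpleGraph V) (U : Set V) (k : ℕ) where
  branch : Fin k → Set V
  connected : ∀ i, (G.induce (branch i)).Connected
  disjoint : ∀ i j, i ≠ j → Disjoint (branch i) (branch j)
  rooted : ∀ i, (branch i ∩ U).Nonempty
  adj : ∀ i j : Fin k, (j : ℕ) = (i : ℕ) + 1 → ∃ a ∈ branch i, ∃ b ∈ branch j, G.Adj a b

/-- A subdivision of the `k`-fan in `G` with universal (center) vertex `v`:
branch vertices `b 0, …, b (k-1)` of the path, internally disjoint spokes from `v`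
and internally disjoint path segments between consecutive branch vertices. -/
structure FanSubdivision {V : Type*} (G : SimpleGraph V) (v : V) (k : ℕ) where
  b : Fin k → V
  binj : Function.Injective b
  bne : ∀ i, b i ≠ v
  spoke : ∀ i : Fin k, G.Walk v (b i)
  spokePath : ∀ i, (spoke i).IsPath
  seg : ∀ (i : Fin k) (h : (i : ℕ) + 1 < k), G.Walk (b i) (b ⟨(i : ℕ) + 1, h⟩)
  segPath : ∀ i h, (seg i h).IsPath
  vNotinSeg : ∀ i h, v ∉ (seg i h).support
  spokeDisj : ∀ i j, i ≠ j →
    {x | x ∈ (spoke i).support} ∩ {x | x ∈ (spoke j).support} = {v}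
  spokeSegDisj : ∀ i j h,
    {x | x ∈ (spoke i).support} ∩ {x | x ∈ (seg j h).support} ⊆
      ({b i} : Set V) ∩ {b j, b ⟨(j : ℕ) + 1, h⟩}
  segDisj : ∀ i j hi hj, i ≠ j →
    {x | x ∈ (seg i hi).support} ∩ {x | x ∈ (seg j hj).support} ⊆
      ({b i, b ⟨(i : ℕ) + 1, hi⟩} : Set V) ∩ {b j, b ⟨(j : ℕ) + 1, hj⟩}

/-- A `p`-centered colouring: every (nonempty) connected induced subgraph either receives
more than `p` colours or has a uniquely coloured vertex. -/
def IsPCenteredColoring {V : Type*} (G : SimpleGraph V) (p : ℕ) (c : V → ℕ) : Prop :=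
  ∀ S : Set V, S.Nonempty → (G.induce S).Connected →
    p < (c '' S).ncard ∨ ∃ x ∈ S, ∀ y ∈ S, c y = c x → y = x

/-- Treewidth, characterised via tree-layouts: the minimum over tree-layouts of the maximum
over nodes `u` of the number of strict ancestors of `u` that are `G`-neighbours of some
descendant of `u` (including `u`). -/
noncomputable def treewidthTL {V : Type*} (G : SimpleGraph V) : ℕ :=
  sInf {k | ∃ L : TreeLayout G, ∀ u : V,
    {a : V | L.StrictAnc a u ∧ ∃ d : V, L.Anc u d ∧ G.Adj a d}.ncard ≤ k}

/-- The pruned subtree of `x` in a tree-layout: descendants of `x` (including `x`) having a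
neighbour of `x` among their own descendants. -/
def prunedSubtree {V : Type*} {G : SimpleGraph V} (L : TreeLayout G) (x : V) : Set V :=
  {y : V | L.Anc x y ∧ ∃ d : V, L.Anc y d ∧ G.Adj x d}

/-- Treespan: the minimum over tree-layouts of (maximum size of a pruned subtree minus one). -/
noncomputable def treespan {V : Type*} (G : SimpleGraph V) : ℕ :=
  sInf {k | ∃ L : TreeLayout G, ∀ x : V, (prunedSubtree L x).ncard ≤ k + 1}

/-- A tree decomposition of `G`. -/
structure TreeDecomp {V : Type*} (G : SimpleGraph V) where
  ι : Type
  tree : SimpleGraph ι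
  isTree : tree.IsTree
  bag : ι → Set V
  coverV : ∀ v : V, ∃ t, v ∈ bag t
  coverE : ∀ ⦃x y : V⦄, G.Adj x y → ∃ t, x ∈ bag t ∧ y ∈ bag t
  subtree : ∀ v : V, (tree.induce {t : ι | v ∈ bag t}).Connected

/-- Domino treewidth: minimum width over tree decompositions in which every vertex
belongs to at most two bags. -/
noncomputable def dominoTreewidth {V : Type*} (G : SimpleGraph V) : ℕ :=
  sInf {k | ∃ D : TreeDecomp G, (∀ v : V, {t : D.ι | v ∈ D.bag t}.ncard ≤ 2) ∧
    ∀ t : D.ι, (D.bag t).ncard ≤ k + 1}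

/-- Edge-treewidth via tree-layouts: the minimum over tree-layouts of the maximum over nodes
`u` of the number of edges with one endpoint a descendant of `u` (including `u`) and the other
a strict ancestor of `u`. -/
noncomputable def edgeTreewidth {V : Type*} (G : SimpleGraph V) : ℕ :=
  sInf {k | ∃ L : TreeLayout G, ∀ u : V,
    {p : V × V | L.StrictAnc p.1 u ∧ L.Anc u p.2 ∧ G.Adj p.1 p.2}.ncard ≤ k}

/-- `S` is a block (2-connected component) of `G`: a maximal connected set of vertices whose
induced subgraph has no cutvertex. -/
def IsBlock {V : Type*} (G : SimpleGraph V) (S : Set V) : Prop :=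
  S.Nonempty ∧ (G.induce S).Connected ∧
    (∀ x ∈ S, (G.induce (S \ {x})).Preconnected) ∧
    ∀ S' : Set V, S ⊆ S' → (G.induce S').Connected →
      (∀ x ∈ S', (G.induce (S' \ {x})).Preconnected) → S' = S

/-- Biconnected maximum degree: the maximum over blocks of `G` of the maximum degree
inside the block. -/
noncomputable def biconnMaxDegree {V : Type*} (G : SimpleGraph V) : ℕ :=
  sSup {d | ∃ (S : Set V) (v : V), IsBlock G S ∧ v ∈ S ∧ d = {w ∈ S | G.Adj v w}.ncard}

/-- `G` is 3-connected: more than 3 vertices, and removing any two vertices leaves it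
connected. -/
def ThreeConnected {V : Type*} (G : SimpleGraph V) : Prop :=
  3 < Nat.card V ∧ ∀ x y : V, (G.induce {v : V | v ≠ x ∧ v ≠ y}).Connected

/-- `G` has `H` as a minor (branch-set model). -/
def HasMinor {V W : Type*} (G : SimpleGraph V) (H : SimpleGraph W) : Prop :=
  ∃ B : W → Set V, (∀ w, (G.induce (B w)).Connected) ∧
    (∀ w w', w ≠ w' → Disjoint (B w) (B w')) ∧
    ∀ ⦃w w'⦄, H.Adj w w' → ∃ a ∈ B w, ∃ b ∈ B w', G.Adj a b

/-- Planarity via Wagner's theorem: no `K₅` minor and no `K₃,₃` minor. -/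
def PlanarWagner {V : Type*} (G : SimpleGraph V) : Prop :=
  ¬ HasMinor G (completeGraph (Fin 5)) ∧
    ¬ HasMinor G (completeBipartiteGraph (Fin 3) (Fin 3))

/-- A subdivision of the `k`-wheel in `G` with hub `v`. -/
structure WheelSubdivision {V : Type*} (G : SimpleGraph V) (v : V) (k : ℕ) where
  b : Fin k → V
  binj : Function.Injective b
  bne : ∀ i, b i ≠ v
  spoke : ∀ i : Fin k, G.Walk v (b i)
  spokePath : ∀ i, (spoke i).IsPath
  seg : ∀ i : Fin k, G.Walk (b i) (b (finRotate k i))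
  segPath : ∀ i, (seg i).IsPath
  vNotinSeg : ∀ i, v ∉ (seg i).support
  spokeDisj : ∀ i j, i ≠ j →
    {x | x ∈ (spoke i).support} ∩ {x | x ∈ (spoke j).support} = {v}
  spokeSegDisj : ∀ i j,
    {x | x ∈ (spoke i).support} ∩ {x | x ∈ (seg j).support} ⊆
      ({b i} : Set V) ∩ {b j, b (finRotate k j)}
  segDisj : ∀ i j, i ≠ j →
    {x | x ∈ (seg i).support} ∩ {x | x ∈ (seg j).support} ⊆
      ({b i, b (finRotate k i)} : Set V) ∩ {b j, b (finRotate k j)}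

/-- A subdivision of the `k`-dipole with poles `u`, `v`: `k` internally vertex-disjoint
`u`–`v` paths of length at least `2`. -/
structure DipoleSubdivision {V : Type*} (G : SimpleGraph V) (u v : V) (k : ℕ) where
  path : Fin k → G.Walk u v
  isPath : ∀ i, (path i).IsPath
  len : ∀ i, 2 ≤ (path i).length
  disj : ∀ i j, i ≠ j →
    {x | x ∈ (path i).support} ∩ {x | x ∈ (path j).support} = ({u, v} : Set V)

/-- A separation of `G`. -/
def IsSeparation {V : Type*} (G : SimpleGraph V) (A B : Set V) : Prop :=
  A ∪ B = Set.univ ∧ ∀ a ∈ A \ B, ∀ b ∈ B \ A, ¬ G.Adj a b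

/-- `μ(X,Y)`: the minimum order of a separation `(A,B)` with `X ⊆ A` and `Y ⊆ B`. -/
noncomputable def muSep {V : Type*} (G : SimpleGraph V) (X Y : Set V) : ℕ :=
  sInf {n | ∃ A B : Set V, IsSeparation G A B ∧ X ⊆ A ∧ Y ⊆ B ∧ (A ∩ B).ncard = n}

def IsMaximalClique {V : Type*} (G : SimpleGraph V) (K : Set V) : Prop :=
  G.IsClique K ∧ ∀ K' : Set V, G.IsClique K' → K ⊆ K' → K' = K

/-- `G` is proper chordal: it has a tree-layout in which every maximal clique is an
interval of a root-to-leaf path. -/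
def ProperChordal {V : Type*} (G : SimpleGraph V) : Prop :=
  ∃ L : TreeLayout G, ∀ K : Set V, IsMaximalClique G K →
    ∃ a b : V, L.Anc a b ∧ K = L.interval a b

/-- A topological-minor model (subdivision embedding) of `H` in `G`. -/
structure TopMinorEmbedding {W V : Type*} (H : SimpleGraph W) (G : SimpleGraph V) where
  φ : W → V
  inj : Function.Injective φ
  path : ∀ ⦃a b : W⦄, H.Adj a b → G.Walk (φ a) (φ b)
  isPath : ∀ ⦃a b : W⦄ (h : H.Adj a b), (path h).IsPath
  branchOnPath : ∀ ⦃a b : W⦄ (h : H.Adj a b) (w : W),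
    φ w ∈ (path h).support → w = a ∨ w = b
  disj : ∀ ⦃a b c d : W⦄ (hab : H.Adj a b) (hcd : H.Adj c d), s(a, b) ≠ s(c, d) →
    {x | x ∈ (path hab).support} ∩ {x | x ∈ (path hcd).support} ⊆
      ({φ a, φ b} : Set V) ∩ {φ c, φ d}

/-- A subdivision of the star `K_{1,s}` in `H` with all leaves in `X`. -/
structure StarSubdivision {V : Type*} (H : SimpleGraph V) (X : Set V) (s : ℕ) where
  center : V
  leaf : Fin s → V
  leafInj : Function.Injective leaf
  leafX : ∀ i, leaf i ∈ X
  leafNe : ∀ i, leaf i ≠ center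
  path : ∀ i : Fin s, H.Walk center (leaf i)
  isPath : ∀ i, (path i).IsPath
  disj : ∀ i j, i ≠ j →
    {x | x ∈ (path i).support} ∩ {x | x ∈ (path j).support} = {center}

/-- The weight `w(t,U)` of a set `U` at a node `t` of a tree decomposition is at most `a`:
`|β(t) ∩ U|` plus the number of a suitable family of adhesions incident to `t` whose union
hits all paths from `β(t)` to `U ∖ β(t)` is at most `a`. -/
def WeightLE {V : Type*} {G : SimpleGraph V} (D : TreeDecomp G) (U : Set V) (t : D.ι)
    (a : ℕ) : Prop :=
  ∃ F : Set D.ι, (∀ s ∈ F, D.tree.Adj t s) ∧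
    (D.bag t ∩ U).ncard + F.ncard ≤ a ∧
    ∀ ⦃x y : V⦄ (p : G.Walk x y), x ∈ D.bag t → y ∈ U \ D.bag t →
      ∃ z ∈ p.support, ∃ s ∈ F, z ∈ D.bag t ∩ D.bag s

/-- The graph obtained from `G` by subdividing the edge `xy` into a path with `n + 1`
new internal vertices. -/
def subdivideEdge {V : Type*} (G : SimpleGraph V) (x y : V) (n : ℕ) :
    SimpleGraph (V ⊕ Fin (n + 1)) :=
  SimpleGraph.fromRel (fun a b =>
    (∃ u w : V, a = Sum.inl u ∧ b = Sum.inl w ∧ G.Adj u w ∧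
      ¬(u = x ∧ w = y) ∧ ¬(u = y ∧ w = x)) ∨
    (a = Sum.inl x ∧ b = Sum.inr 0) ∨
    (∃ i : Fin n, a = Sum.inr i.castSucc ∧ b = Sum.inr i.succ) ∨
    (a = Sum.inr (Fin.last n) ∧ b = Sum.inl y))


section AuxIntervalCompletion

variable {V : Type*} {T : SimpleGraph V}

private lemma aux_dist_add_dist (hc : T.Connected) {u v c : V}
    (w : T.Walk u v) (hw : w.length = T.dist u v) (h : c ∈ w.support) :
    T.dist u c + T.dist c v = T.dist u v := by
  classical
  have h1 : T.dist u c ≤ (w.takeUntil c h).length := SimpleGraph.dist_le _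
  have h2 : T.dist c v ≤ (w.dropUntil c h).length := SimpleGraph.dist_le _
  have h3 : (w.takeUntil c h).length + (w.dropUntil c h).length = w.length := by
    have h4 := congrArg SimpleGraph.Walk.length (w.take_spec h)
    rwa [SimpleGraph.Walk.length_append] at h4
  have h5 := hc.dist_triangle (u := u) (v := c) (w := v)
  omega

private lemma aux_anc_total (hT : T.IsTree) {r x y z : V}
    (hx : AncIn T r x z) (hy : AncIn T r y z) (hle : T.dist r x ≤ T.dist r y) :
    AncIn T r x y := by
  classical
  have hc := hT.isConnected
  simp only [AncIn] at hx hy ⊢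
  obtain ⟨p, hp, hpl⟩ := hc.exists_path_of_dist r x
  obtain ⟨q, hq, hql⟩ := hc.exists_path_of_dist x z
  obtain ⟨p', hp', hpl'⟩ := hc.exists_path_of_dist r y
  obtain ⟨q', hq', hql'⟩ := hc.exists_path_of_dist y z
  have hw : (p.append q).length = T.dist r z := by
    rw [SimpleGraph.Walk.length_append, hpl, hql]; exact hx
  have hw' : (p'.append q').length = T.dist r z := by
    rw [SimpleGraph.Walk.length_append, hpl', hql']; exact hy
  have hwp := (p.append q).isPath_of_length_eq_dist hw
  have hwp' := (p'.append q').isPath_of_length_eq_dist hw'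
  have heq : p.append q = p'.append q' :=
    congrArg Subtype.val
      (hT.IsAcyclic.path_unique ⟨p.append q, hwp⟩ ⟨p'.append q', hwp'⟩)
  have hxs : x ∈ (p'.append q').support := by
    rw [← heq]
    exact (SimpleGraph.Walk.mem_support_append_iff _ _).mpr (Or.inl p.end_mem_support)
  rcases (SimpleGraph.Walk.mem_support_append_iff _ _).mp hxs with h1 | h1
  · exact aux_dist_add_dist hc p' hpl' h1
  · have h2 := aux_dist_add_dist hc q' hql' h1
    have h3 : T.dist y x = 0 := by omega
    have h4 : y = x := hc.dist_eq_zero_iff.mp h3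
    subst h4
    simp [SimpleGraph.dist_self]

end AuxIntervalCompletion

/-- the interval completion along a tree-layout of bandwidth at most `k`
has all maximal cliques equal to intervals and clique number at most `k + 1`. -/
theorem interval_completion_cliques {V : Type*} (G : SimpleGraph V) (k : ℕ)
    (L : TreeLayout G) (hL : L.BandwidthLE k) (H : SimpleGraph V)
    (hH : H = SimpleGraph.fromRel (fun a b => ∃ x y : V, G.Adj x y ∧ L.Anc x y ∧
      a ∈ L.interval x y ∧ b ∈ L.interval x y)) :
    (∀ K : Set V, IsMaximalClique H K → ∃ a b : V, L.Anc a b ∧ K = L.interval a b) ∧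
      ∀ s : Finset V, H.IsClique (s : Set V) → s.card ≤ k + 1 := by
  obtain ⟨hAdjWit, hmemint, ancd, anc_refl, anc_trans, anc_antisymm⟩ :
      (∀ u v : V, H.Adj u v → u ≠ v ∧ ∃ x y : V, G.Adj x y ∧ L.Anc x y ∧
          u ∈ L.interval x y ∧ v ∈ L.interval x y) ∧
        (∀ z x y : V, z ∈ L.interval x y ↔ L.Anc x z ∧ L.Anc z y) ∧
        (∀ u v : V, L.Anc u v →
          L.tree.dist L.root u + L.tree.dist u v = L.tree.dist L.root v) ∧
        (∀ u : V, L.Anc u u) ∧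
        (∀ u v w : V, L.Anc u v → L.Anc v w → L.Anc u w) ∧
        (∀ u v : V, L.Anc u v → L.Anc v u → u = v) := by
    have hc := L.isTree.isConnected
    refine ⟨?_, fun z x y => Iff.rfl, fun u v h => h, ?_, ?_, ?_⟩
    · intro u v h
      rw [hH, SimpleGraph.fromRel_adj] at h
      refine ⟨h.1, ?_⟩
      rcases h.2 with ⟨x, y, h1, h2, h3, h4⟩ | ⟨x, y, h1, h2, h3, h4⟩
      · exact ⟨x, y, h1, h2, h3, h4⟩
      · exact ⟨x, y, h1, h2, h4, h3⟩
    · intro u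
      show L.tree.dist L.root u + L.tree.dist u u = L.tree.dist L.root u
      simp [SimpleGraph.dist_self]
    · intro u v w h1 h2
      have h1' : L.tree.dist L.root u + L.tree.dist u v = L.tree.dist L.root v := h1
      have h2' : L.tree.dist L.root v + L.tree.dist v w = L.tree.dist L.root w := h2
      have t1 : L.tree.dist u w ≤ L.tree.dist u v + L.tree.dist v w := hc.dist_triangle
      have t2 : L.tree.dist L.root w ≤ L.tree.dist L.root u + L.tree.dist u w :=
        hc.dist_triangle
      show L.tree.dist L.root u + L.tree.dist u w = L.tree.dist L.root w
      omega
    · intro u v h1 h2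
      have h1' : L.tree.dist L.root u + L.tree.dist u v = L.tree.dist L.root v := h1
      have h2' : L.tree.dist L.root v + L.tree.dist v u = L.tree.dist L.root u := h2
      have : L.tree.dist u v = 0 := by omega
      exact hc.dist_eq_zero_iff.mp this
  have hc := L.isTree.isConnected
  have comp : ∀ u v w : V, L.Anc u w → L.Anc v w → L.Anc u v ∨ L.Anc v u := by
    intro u v w h1 h2
    rcases le_total (L.tree.dist L.root u) (L.tree.dist L.root v) with h | h
    · exact Or.inl (aux_anc_total L.isTree h1 h2 h)
    · exact Or.inr (aux_anc_total L.isTree h2 h1 h)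
  have hcompAdj : ∀ u v : V, H.Adj u v → L.Anc u v ∨ L.Anc v u := by
    intro u v h
    obtain ⟨-, x, y, -, -, hu, hv⟩ := hAdjWit u v h
    exact comp u v y ((hmemint u x y).mp hu).2 ((hmemint v x y).mp hv).2
  have hdistk : ∀ u v : V, H.Adj u v → L.tree.dist u v ≤ k := by
    have key : ∀ u v : V, H.Adj u v → L.Anc u v → L.tree.dist u v ≤ k := by
      intro u v h hanc
      obtain ⟨-, x, y, hG, hxy, hu, hv⟩ := hAdjWit u v h
      have e1 := ancd u v hanc
      have e2 := ancd x u ((hmemint u x y).mp hu).1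
      have e3 := ancd v y ((hmemint v x y).mp hv).2
      have e4 := ancd x y hxy
      have e5 := hL hG
      omega
    intro u v h
    rcases hcompAdj u v h with hanc | hanc
    · exact key u v h hanc
    · rw [SimpleGraph.dist_comm]; exact key v u h.symm hanc
  constructor
  · -- maximal cliques are intervals
    intro K hK
    obtain ⟨hKc, hKmax⟩ := hK
    obtain ⟨v0⟩ := hc.nonempty
    rcases K.eq_empty_or_nonempty with rfl | hKne
    · exfalso
      have hsing : H.IsClique {v0} := Set.pairwise_singleton v0 H.Adj
      have := hKmax {v0} hsing (Set.empty_subset _)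
      exact (Set.singleton_ne_empty v0) this
    obtain ⟨u0, hu0⟩ := hKne
    by_cases hsing : ∀ z ∈ K, z = u0
    · refine ⟨u0, u0, anc_refl u0, ?_⟩
      have hKeq : K = {u0} := Set.eq_singleton_iff_unique_mem.mpr ⟨hu0, hsing⟩
      rw [hKeq]
      ext z
      rw [hmemint z u0 u0]
      constructor
      · rintro rfl; exact ⟨anc_refl z, anc_refl z⟩
      · rintro ⟨h1, h2⟩
        exact anc_antisymm z u0 h2 h1
    · push_neg at hsing
      obtain ⟨u1, hu1, hu1ne⟩ := hsing
      have himg : ∀ z ∈ K, L.tree.dist L.root z ≤ L.tree.dist L.root u0 + k := by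
        intro z hz
        by_cases h : z = u0
        · subst h; omega
        · have hA : H.Adj u0 z := hKc hu0 hz fun e => h e.symm
          have h1 := hdistk u0 z hA
          have h2 : L.tree.dist L.root z ≤ L.tree.dist L.root u0 + L.tree.dist u0 z :=
            hc.dist_triangle
          omega
      have hinj : Set.InjOn (fun z => L.tree.dist L.root z) K := by
        intro u hu v hv huv
        by_contra hne'
        have hA : H.Adj u v := hKc hu hv hne'
        rcases hcompAdj u v hA with h | h
        · have e := ancd u v h
          have : L.tree.dist u v = 0 := by simp only at huv; omega
          exact hne' (hc.dist_eq_zero_iff.mp this)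
        · have e := ancd v u h
          have : L.tree.dist v u = 0 := by simp only at huv; omega
          exact hne' (hc.dist_eq_zero_iff.mp this).symm
      have hKfin : K.Finite := by
        have h1 : ((fun z => L.tree.dist L.root z) '' K).Finite :=
          (Set.finite_Iic (L.tree.dist L.root u0 + k)).subset
            (by rintro n ⟨z, hz, rfl⟩; exact himg z hz)
        exact Set.Finite.of_finite_image h1 hinj
      obtain ⟨a, ha, hamin⟩ :=
        Set.exists_min_image K (fun z => L.tree.dist L.root z) hKfin ⟨u0, hu0⟩
      obtain ⟨b, hb, hbmax⟩ :=
        Set.exists_max_image K (fun z => L.tree.dist L.root z) hKfin ⟨u0, hu0⟩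
      have hancA : ∀ z ∈ K, L.Anc a z := by
        intro z hz
        by_cases h : z = a
        · subst h; exact anc_refl z
        · have hA : H.Adj a z := hKc ha hz fun e => h e.symm
          rcases hcompAdj a z hA with h' | h'
          · exact h'
          · have e := ancd z a h'
            have h2 := hamin z hz
            have : L.tree.dist z a = 0 := by omega
            exact absurd (hc.dist_eq_zero_iff.mp this) h
      have hancB : ∀ z ∈ K, L.Anc z b := by
        intro z hz
        by_cases h : z = b
        · subst h; exact anc_refl z
        · have hA : H.Adj z b := hKc hz hb h
          rcases hcompAdj z b hA with h' | h'
          · exact h'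
          · have e := ancd b z h'
            have h2 := hbmax z hz
            have : L.tree.dist b z = 0 := by omega
            exact absurd (hc.dist_eq_zero_iff.mp this).symm h
      have hab : a ≠ b := by
        rintro rfl
        have h1 := anc_antisymm u0 a (hancB u0 hu0) (hancA u0 hu0)
        have h2 := anc_antisymm u1 a (hancB u1 hu1) (hancA u1 hu1)
        exact hu1ne (h2.trans h1.symm)
      have hA : H.Adj a b := hKc ha hb hab
      obtain ⟨-, x, y, hGxy, hAncxy, hax, hby⟩ := hAdjWit a b hA
      refine ⟨x, y, hAncxy, ?_⟩
      have hclique : H.IsClique (L.interval x y) := by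
        intro u hu v hv huv
        rw [hH, SimpleGraph.fromRel_adj]
        exact ⟨huv, Or.inl ⟨x, y, hGxy, hAncxy, hu, hv⟩⟩
      have hsub : K ⊆ L.interval x y := by
        intro z hz
        refine (hmemint z x y).mpr ⟨?_, ?_⟩
        · exact anc_trans x a z ((hmemint a x y).mp hax).1 (hancA z hz)
        · exact anc_trans z b y (hancB z hz) ((hmemint b x y).mp hby).2
      exact (hKmax _ hclique hsub).symm
  · -- clique number bound
    intro s hs
    classical
    by_cases hcard : s.card ≤ 1
    · omega
    · have hne : s.Nonempty := Finset.card_pos.mp (by omega)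
      obtain ⟨a, ha, hamin⟩ := s.exists_min_image (fun z => L.tree.dist L.root z) hne
      obtain ⟨b, hb, hbmax⟩ := s.exists_max_image (fun z => L.tree.dist L.root z) hne
      have hinj : Set.InjOn (fun z => L.tree.dist L.root z) ↑s := by
        intro u hu v hv huv
        by_contra hne'
        have hA : H.Adj u v := hs hu hv hne'
        rcases hcompAdj u v hA with h | h
        · have e := ancd u v h
          have : L.tree.dist u v = 0 := by simp only at huv; omega
          exact hne' (hc.dist_eq_zero_iff.mp this)
        · have e := ancd v u h
          have : L.tree.dist v u = 0 := by simp only at huv; omega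
          exact hne' (hc.dist_eq_zero_iff.mp this).symm
      have hfb : L.tree.dist L.root b ≤ L.tree.dist L.root a + k := by
        by_cases h : a = b
        · subst h; omega
        · have hA : H.Adj a b := hs ha hb h
          have hd := hdistk a b hA
          rcases hcompAdj a b hA with h' | h'
          · have e := ancd a b h'; omega
          · have e := ancd b a h'
            have h2 := hamin b hb
            omega
      have hcardeq : s.card = (s.image (fun z => L.tree.dist L.root z)).card :=
        (Finset.card_image_of_injOn hinj).symm
      have hsub : s.image (fun z => L.tree.dist L.root z) ⊆
          Finset.Icc (L.tree.dist L.root a) (L.tree.dist L.root b) := by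
        intro n hn
        obtain ⟨z, hz, rfl⟩ := Finset.mem_image.mp hn
        exact Finset.mem_Icc.mpr ⟨hamin z hz, hbmax z hz⟩
      have hle := Finset.card_le_card hsub
      rw [Nat.card_Icc] at hle
      omega
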